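/- There is no 2-2-2-2-2 configuration under the Modified CFLS coloring φ containing a rainbow 5-cycle together with at least one matching color class; that is, there do not exist five distinct vertices a, b, c, d, e ∈ V forming a 2-2-2-2-2 configuration in which the five edges ab, bc, cd, de, ea receive pairwise distinct colors and some color class consists of two vertex-disjoint edges. -/
import Mathlib


namespace CFLS

/-- A vertex of `K_n` for `n = 2^(m^2)`: `m` blocks, each a string of `m` bits.
`x k` is the `k`-th block `x^(k+1)`, and `x k j` is its `j`-th bit (most significant first). -/
abbrev Vtx (m : ℕ) := Fin m → Fin m → Bool

/-- The `j`-th bit of a bit string (as a total function of `j : ℕ`). -/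
def bitAt {N : ℕ} (f : Fin N → Bool) (j : ℕ) : Bool :=
  if h : j < N then f ⟨j, h⟩ else false

/-- The value of a bit string read as a binary integer, most significant bit first. -/
def strToNat {N : ℕ} (f : Fin N → Bool) : ℕ :=
  ∑ j : Fin N, if f j then 2 ^ (N - 1 - j.val) else 0

/-- The `k`-th block of a vertex (as a total function of `k : ℕ`). -/
def blockAt {m : ℕ} (x : Vtx m) (k : ℕ) : Fin m → Bool :=
  if h : k < m then x ⟨k, h⟩ else fun _ => false

/-- The least block index at which `x` and `y` differ. -/
noncomputable def firstDiffBlock {m : ℕ} (x y : Vtx m) : ℕ :=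
  sInf {k | blockAt x k ≠ blockAt y k}

/-- The position (1-indexed) of the first bit at which two bit strings differ; `0` if equal. -/
noncomputable def firstDiffIdx {N : ℕ} (f g : Fin N → Bool) : ℕ :=
  if f = g then 0 else sInf {j | bitAt f j ≠ bitAt g j} + 1

/-- The value of a vertex read as a binary integer (concatenation of its blocks). -/
def vtxToNat {m : ℕ} (x : Vtx m) : ℕ :=
  ∑ k : Fin m, strToNat (x k) * (2 ^ m) ^ (m - 1 - k.val)

/-- The colors of the Modified CFLS coloring:
`((i, {x^(i), y^(i)}), i_1, …, i_m, δ_1, …, δ_m)`. -/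
abbrev Color (m : ℕ) := (ℕ × Set (Fin m → Bool)) × (Fin m → ℕ) × (Fin m → ℤ)

/-- The Modified CFLS color of the edge `xy` assuming `x ≤ y` as binary integers. -/
noncomputable def phiAux {m : ℕ} (x y : Vtx m) : Color m :=
  ((firstDiffBlock x y,
      {blockAt x (firstDiffBlock x y), blockAt y (firstDiffBlock x y)}),
   fun k => firstDiffIdx (x k) (y k),
   fun k => if strToNat (x k) ≤ strToNat (y k) then (1 : ℤ) else -1)

/-- The Modified CFLS coloring `φ`. -/
noncomputable def phi {m : ℕ} (x y : Vtx m) : Color m :=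
  if vtxToNat x ≤ vtxToNat y then phiAux x y else phiAux y x

/-- The ten edges among five vertices. -/
def edgeList {m : ℕ} (a b c d e : Vtx m) : List (Vtx m × Vtx m) :=
  [(a,b),(a,c),(a,d),(a,e),(b,c),(b,d),(b,e),(c,d),(c,e),(d,e)]

/-- The number of the ten edges among `a,b,c,d,e` receiving color `col` under `φ`. -/
noncomputable def colorCount {m : ℕ} (a b c d e : Vtx m) (col : Color m) : ℕ :=
  ((edgeList a b c d e).map fun p => phi p.1 p.2).countP fun x =>
    @decide (x = col) (Classical.propDecidable _)

/-- Five pairwise distinct vertices. -/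
def Distinct5 {m : ℕ} (a b c d e : Vtx m) : Prop :=
  a ≠ b ∧ a ≠ c ∧ a ≠ d ∧ a ≠ e ∧ b ≠ c ∧ b ≠ d ∧ b ≠ e ∧ c ≠ d ∧ c ≠ e ∧ d ≠ e

/-- `col` appears on some edge among `a,b,c,d,e`. -/
noncomputable def IsAttained {m : ℕ} (a b c d e : Vtx m) (col : Color m) : Prop :=
  colorCount a b c d e col ≠ 0

/-- A 2-2-2-2-2 configuration: five distinct vertices such that `φ` on the ten edges
among them takes exactly five values, each attained on exactly two edges. -/
def IsConfig22222 {m : ℕ} (a b c d e : Vtx m) : Prop :=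
  Distinct5 a b c d e ∧
  ∀ col : Color m, colorCount a b c d e col = 0 ∨ colorCount a b c d e col = 2

/-- The color class of `col` is a matching: two vertex-disjoint edges of color `col`. -/
def IsMatchingClass {m : ℕ} (a b c d e : Vtx m) (col : Color m) : Prop :=
  ∃ p ∈ edgeList a b c d e, ∃ q ∈ edgeList a b c d e,
    phi p.1 p.2 = col ∧ phi q.1 q.2 = col ∧
    p.1 ≠ q.1 ∧ p.1 ≠ q.2 ∧ p.2 ≠ q.1 ∧ p.2 ≠ q.2

/-- The color class of `col` is a path: two distinct edges of color `col` sharing a vertex. -/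
def IsPathClass {m : ℕ} (a b c d e : Vtx m) (col : Color m) : Prop :=
  ∃ p ∈ edgeList a b c d e, ∃ q ∈ edgeList a b c d e,
    p ≠ q ∧ phi p.1 p.2 = col ∧ phi q.1 q.2 = col ∧
    (p.1 = q.1 ∨ p.1 = q.2 ∨ p.2 = q.1 ∨ p.2 = q.2)


-- ============ Infrastructure ============
section Infra

open Finset

/-- Tail bound: positional value with digits `< B` is `< B^M`. -/
lemma posval_lt (B : ℕ) (F : ℕ → ℕ) (hF : ∀ j, F j < B) :
    ∀ M, ∑ j ∈ Finset.range M, F j * B ^ (M - 1 - j) < B ^ M := by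
  have hB : 0 < B := Nat.lt_of_le_of_lt (Nat.zero_le _) (hF 0)
  intro M
  induction M with
  | zero => simp
  | succ M ih =>
    rw [Finset.sum_range_succ]
    have h1 : ∀ j ∈ Finset.range M, F j * B ^ (M + 1 - 1 - j) = B * (F j * B ^ (M - 1 - j)) := by
      intro j hj
      rw [Finset.mem_range] at hj
      have : M + 1 - 1 - j = (M - 1 - j) + 1 := by omega
      rw [this, pow_succ]; ring
    rw [Finset.sum_congr rfl h1, ← Finset.mul_sum]
    have h2 : M + 1 - 1 - M = 0 := by omega
    rw [h2, pow_zero, mul_one, pow_succ]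
    have h3 := hF M
    have h4 : B * (∑ j ∈ Finset.range M, F j * B ^ (M - 1 - j)) + B ≤ B * B ^ M := by
      have := Nat.mul_le_mul_left B (Nat.succ_le_of_lt ih)
      rw [Nat.mul_succ] at this
      exact this
    calc (B * ∑ j ∈ Finset.range M, F j * B ^ (M - 1 - j)) + F M
        < B * (∑ j ∈ Finset.range M, F j * B ^ (M - 1 - j)) + B := by omega
      _ ≤ B * B ^ M := h4
      _ = B ^ M * B := by ring

/-- Positional comparison: first differing digit decides. -/
lemma posval_lt_of_digit_lt (B M t : ℕ) (F G : ℕ → ℕ) (hF : ∀ j, F j < B) (hG : ∀ j, G j < B)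
    (ht : t < M) (hpre : ∀ j, j < t → F j = G j) (hlt : F t < G t) :
    ∑ j ∈ Finset.range M, F j * B ^ (M - 1 - j) < ∑ j ∈ Finset.range M, G j * B ^ (M - 1 - j) := by
  have hB : 0 < B := Nat.lt_of_le_of_lt (Nat.zero_le _) (hF 0)
  have hsplit : ∀ H : ℕ → ℕ, ∑ j ∈ Finset.range M, H j * B ^ (M - 1 - j)
      = (∑ j ∈ Finset.range t, H j * B ^ (M - 1 - j)) + H t * B ^ (M - 1 - t)
        + ∑ j ∈ Finset.Ico (t+1) M, H j * B ^ (M - 1 - j) := by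
    intro H
    rw [Finset.range_eq_Ico, ← Finset.sum_Ico_consecutive _ (Nat.zero_le (t+1)) ht,
      ← Finset.range_eq_Ico, Finset.sum_range_succ]
  rw [hsplit F, hsplit G]
  have hpre' : ∑ j ∈ Finset.range t, F j * B ^ (M - 1 - j)
      = ∑ j ∈ Finset.range t, G j * B ^ (M - 1 - j) := by
    refine Finset.sum_congr rfl fun j hj => ?_
    rw [Finset.mem_range] at hj
    rw [hpre j hj]
  rw [hpre']
  have htail : ∀ H : ℕ → ℕ, (∀ j, H j < B) →
      ∑ j ∈ Finset.Ico (t+1) M, H j * B ^ (M - 1 - j) < B ^ (M - 1 - t) := by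
    intro H hH
    rw [Finset.sum_Ico_eq_sum_range]
    have : ∀ j ∈ Finset.range (M - (t+1)), H (t + 1 + j) * B ^ (M - 1 - (t + 1 + j))
        = H (t + 1 + j) * B ^ ((M - 1 - t) - 1 - j) := by
      intro j hj; congr 2; omega
    rw [Finset.sum_congr rfl this]
    have hM : M - (t+1) = M - 1 - t := by omega
    rw [hM]
    exact posval_lt B (fun j => H (t+1+j)) (fun j => hH _) (M - 1 - t)
  have hTF := htail F hF
  have hTG : 0 ≤ ∑ j ∈ Finset.Ico (t+1) M, G j * B ^ (M - 1 - j) := Nat.zero_le _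
  have hstep : F t * B ^ (M - 1 - t) + B ^ (M - 1 - t) ≤ G t * B ^ (M - 1 - t) := by
    have : F t + 1 ≤ G t := hlt
    calc F t * B ^ (M - 1 - t) + B ^ (M - 1 - t) = (F t + 1) * B ^ (M - 1 - t) := by ring
      _ ≤ G t * B ^ (M - 1 - t) := Nat.mul_le_mul_right _ this
  omega

end Infra
-- ============ Strings and vertices ============
section Str

variable {m : ℕ}

lemma strToNat_eq_range {N : ℕ} (f : Fin N → Bool) :
    strToNat f = ∑ j ∈ Finset.range N, (if bitAt f j then 1 else 0) * 2 ^ (N - 1 - j) := by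
  rw [strToNat]
  have h1 : (∑ j : Fin N, if f j then 2 ^ (N - 1 - (j:ℕ)) else 0)
      = ∑ j : Fin N, (if bitAt f (j:ℕ) then 1 else 0) * 2 ^ (N - 1 - (j:ℕ)) := by
    apply Finset.sum_congr rfl
    intro j _
    rw [bitAt, dif_pos j.isLt]
    by_cases h : f j <;> simp [h]
  rw [h1, Fin.sum_univ_eq_sum_range (fun j => (if bitAt f j then 1 else 0) * 2 ^ (N - 1 - j)) N]

lemma strToNat_lt_two_pow {N : ℕ} (f : Fin N → Bool) : strToNat f < 2 ^ N := by
  rw [strToNat_eq_range]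
  exact posval_lt 2 _ (fun j => by split <;> omega) N

/-- spec of the first differing bit. -/
lemma bit_spec {N : ℕ} {f g : Fin N → Bool} (h : f ≠ g) :
    sInf {j | bitAt f j ≠ bitAt g j} < N ∧
    bitAt f (sInf {j | bitAt f j ≠ bitAt g j}) ≠ bitAt g (sInf {j | bitAt f j ≠ bitAt g j}) ∧
    ∀ j < sInf {j | bitAt f j ≠ bitAt g j}, bitAt f j = bitAt g j := by
  obtain ⟨j0, hj0⟩ := Function.ne_iff.mp h
  have hmem : (j0 : ℕ) ∈ {j | bitAt f j ≠ bitAt g j} := by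
    simp only [Set.mem_setOf_eq, bitAt, dif_pos j0.isLt]
    exact hj0
  have hne : {j | bitAt f j ≠ bitAt g j}.Nonempty := ⟨j0, hmem⟩
  have hsmem := Nat.sInf_mem hne
  refine ⟨?_, hsmem, ?_⟩
  · exact Nat.lt_of_le_of_lt (Nat.sInf_le hmem) j0.isLt
  · intro j hj
    by_contra hne2
    exact absurd (Nat.sInf_le (s := {j | bitAt f j ≠ bitAt g j}) hne2) (by omega)

lemma strToNat_lt_of_bit {N : ℕ} {f g : Fin N → Bool} (h : f ≠ g)
    (hf : bitAt f (sInf {j | bitAt f j ≠ bitAt g j}) = false) : strToNat f < strToNat g := by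
  obtain ⟨htN, hdiff, hpre⟩ := bit_spec h
  rw [strToNat_eq_range, strToNat_eq_range]
  apply posval_lt_of_digit_lt 2 N (sInf {j | bitAt f j ≠ bitAt g j}) _ _
    (fun j => by split <;> omega) (fun j => by split <;> omega) htN
  · intro j hj; rw [hpre j hj]
  · have hg : bitAt g (sInf {j | bitAt f j ≠ bitAt g j}) = true := by
      cases hgb : bitAt g (sInf {j | bitAt f j ≠ bitAt g j})
      · exact absurd (hf.trans hgb.symm) hdiff
      · rfl
    rw [hf, hg]; norm_num

lemma strToNat_ne {N : ℕ} {f g : Fin N → Bool} (h : f ≠ g) : strToNat f ≠ strToNat g := by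
  cases hfb : bitAt f (sInf {j | bitAt f j ≠ bitAt g j})
  · exact Nat.ne_of_lt (strToNat_lt_of_bit h hfb)
  · have hg : bitAt g (sInf {j | bitAt f j ≠ bitAt g j}) = false := by
      obtain ⟨-, hdiff, -⟩ := bit_spec h
      cases hgb : bitAt g (sInf {j | bitAt f j ≠ bitAt g j})
      · rfl
      · exact absurd (hfb.trans hgb.symm) hdiff
    have hcomm : {j | bitAt g j ≠ bitAt f j} = {j | bitAt f j ≠ bitAt g j} := by
      ext j; simp [ne_comm]
    have := strToNat_lt_of_bit (f := g) (g := f) (Ne.symm h) (by rw [hcomm]; exact hg)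
    omega

/-- spec of the first differing block. -/
lemma fdb_spec {x y : Vtx m} (h : x ≠ y) :
    firstDiffBlock x y < m ∧
    blockAt x (firstDiffBlock x y) ≠ blockAt y (firstDiffBlock x y) ∧
    ∀ k < firstDiffBlock x y, blockAt x k = blockAt y k := by
  obtain ⟨k0, hk0⟩ := Function.ne_iff.mp h
  have hmem : (k0 : ℕ) ∈ {k | blockAt x k ≠ blockAt y k} := by
    simp only [Set.mem_setOf_eq, blockAt, dif_pos k0.isLt]
    exact hk0
  have hne : {k | blockAt x k ≠ blockAt y k}.Nonempty := ⟨k0, hmem⟩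
  have hsmem := Nat.sInf_mem hne
  refine ⟨Nat.lt_of_le_of_lt (Nat.sInf_le hmem) k0.isLt, hsmem, ?_⟩
  intro k hk
  by_contra hne2
  have hle := Nat.sInf_le (s := {k | blockAt x k ≠ blockAt y k}) hne2
  simp only [firstDiffBlock] at hk
  omega

lemma vtxToNat_eq_range (x : Vtx m) :
    vtxToNat x = ∑ k ∈ Finset.range m, strToNat (blockAt x k) * (2 ^ m) ^ (m - 1 - k) := by
  rw [vtxToNat]
  have h1 : (∑ k : Fin m, strToNat (x k) * (2 ^ m) ^ (m - 1 - (k:ℕ)))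
      = ∑ k : Fin m, strToNat (blockAt x (k:ℕ)) * (2 ^ m) ^ (m - 1 - (k:ℕ)) := by
    apply Finset.sum_congr rfl
    intro k _
    rw [blockAt, dif_pos k.isLt]
  rw [h1, Fin.sum_univ_eq_sum_range (fun k => strToNat (blockAt x k) * (2 ^ m) ^ (m - 1 - k)) m]

lemma vtxToNat_ne {x y : Vtx m} (h : x ≠ y) : vtxToNat x ≠ vtxToNat y := by
  obtain ⟨hIm, hdiff, hpre⟩ := fdb_spec h
  set I := firstDiffBlock x y with hI
  have hxb : ∀ z : Vtx m, ∀ k, strToNat (blockAt z k) < 2 ^ m := fun z k => strToNat_lt_two_pow _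
  have hstr := strToNat_ne hdiff
  rcases Nat.lt_or_ge (strToNat (blockAt x I)) (strToNat (blockAt y I)) with hlt | hge
  · apply Nat.ne_of_lt
    rw [vtxToNat_eq_range, vtxToNat_eq_range]
    exact posval_lt_of_digit_lt _ m I _ _ (hxb x) (hxb y) hIm (fun j hj => by rw [hpre j hj]) hlt
  · apply Nat.ne_of_gt
    rw [vtxToNat_eq_range, vtxToNat_eq_range]
    exact posval_lt_of_digit_lt _ m I _ _ (hxb y) (hxb x) hIm (fun j hj => by rw [hpre j hj]) (by omega)

lemma phi_comm {x y : Vtx m} (h : x ≠ y) : phi x y = phi y x := by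
  have hne := vtxToNat_ne h
  rcases Nat.lt_or_ge (vtxToNat x) (vtxToNat y) with hlt | hge
  · rw [phi, phi, if_pos (Nat.le_of_lt hlt), if_neg (by omega)]
  · rw [phi, phi, if_neg (by omega), if_pos (by omega)]

end Str
-- ============ Color-equality consequences ============
section Pack

variable {m : ℕ}

lemma firstDiffBlock_comm (x y : Vtx m) : firstDiffBlock x y = firstDiffBlock y x := by
  unfold firstDiffBlock
  congr 1
  ext k
  simp [ne_comm]

lemma firstDiffIdx_comm {N : ℕ} (f g : Fin N → Bool) : firstDiffIdx f g = firstDiffIdx g f := by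
  unfold firstDiffIdx
  by_cases h : f = g
  · rw [if_pos h, if_pos h.symm]
  · rw [if_neg h, if_neg (Ne.symm h)]
    congr 2
    ext j
    simp [ne_comm]

lemma firstDiffIdx_eq_zero_iff {N : ℕ} (f g : Fin N → Bool) :
    firstDiffIdx f g = 0 ↔ f = g := by
  unfold firstDiffIdx
  by_cases h : f = g
  · simp [h]
  · simp [h]

/-- three bit strings cannot pairwise first-differ at the same position. -/
lemma tri {N : ℕ} {P Q R : Fin N → Bool} (hPQ : P ≠ Q)
    (h1 : firstDiffIdx P R = firstDiffIdx P Q)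
    (h2 : firstDiffIdx Q R = firstDiffIdx P Q) : False := by
  have hPR : P ≠ R := by
    intro he
    rw [← firstDiffIdx_eq_zero_iff P R] at he
    rw [he] at h1
    exact hPQ ((firstDiffIdx_eq_zero_iff P Q).mp h1.symm)
  have hQR : Q ≠ R := by
    intro he
    rw [← firstDiffIdx_eq_zero_iff Q R] at he
    rw [he] at h2
    exact hPQ ((firstDiffIdx_eq_zero_iff P Q).mp h2.symm)
  obtain ⟨-, hdPQ, -⟩ := bit_spec hPQ
  obtain ⟨-, hdPR, -⟩ := bit_spec hPR
  obtain ⟨-, hdQR, -⟩ := bit_spec hQR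
  set t := sInf {j | bitAt P j ≠ bitAt Q j} with hts
  have e1 : sInf {j | bitAt P j ≠ bitAt R j} = t := by
    have := h1
    unfold firstDiffIdx at this
    rw [if_neg hPR, if_neg hPQ] at this
    omega
  have e2 : sInf {j | bitAt Q j ≠ bitAt R j} = t := by
    have := h2
    unfold firstDiffIdx at this
    rw [if_neg hQR, if_neg hPQ] at this
    omega
  rw [e1] at hdPR
  rw [e2] at hdQR
  cases h1 : bitAt P t <;> cases h2 : bitAt Q t <;> cases h3 : bitAt R t <;> simp_all

lemma pair_eq_cases {α : Type*} {p q r s : α} (h : ({p, q} : Set α) = {r, s}) :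
    (r = p ∨ r = q) ∧ (s = p ∨ s = q) ∧ (p = r ∨ p = s) ∧ (q = r ∨ q = s) := by
  have h1 : r ∈ ({p, q} : Set α) := by rw [h]; exact Set.mem_insert r {s}
  have h2 : s ∈ ({p, q} : Set α) := by rw [h]; exact Set.mem_insert_of_mem r rfl
  have h3 : p ∈ ({r, s} : Set α) := by rw [← h]; exact Set.mem_insert p {q}
  have h4 : q ∈ ({r, s} : Set α) := by rw [← h]; exact Set.mem_insert_of_mem p rfl
  simp only [Set.mem_insert_iff, Set.mem_singleton_iff] at h1 h2 h3 h4
  exact ⟨h1, h2, h3, h4⟩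

/-- Orientation-free consequences of a color equality (packaged). -/
def PackP {m : ℕ} (x y z w : Vtx m) : Prop :=
  firstDiffBlock x y = firstDiffBlock z w ∧
  ({blockAt x (firstDiffBlock x y), blockAt y (firstDiffBlock x y)} : Set (Fin m → Bool))
    = {blockAt z (firstDiffBlock x y), blockAt w (firstDiffBlock x y)} ∧
  (∀ k : ℕ, blockAt x k = blockAt y k ↔ blockAt z k = blockAt w k) ∧
  (∀ k : ℕ, firstDiffIdx (blockAt x k) (blockAt y k) = firstDiffIdx (blockAt z k) (blockAt w k))

lemma packP_swap_left {x y z w : Vtx m} (h : PackP y x z w) : PackP x y z w := by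
  obtain ⟨p1, p2, p3, p4⟩ := h
  rw [firstDiffBlock_comm y x] at p1 p2
  refine ⟨p1, ?_, fun k => (eq_comm.trans (p3 k)), fun k => (firstDiffIdx_comm _ _).trans (p4 k)⟩
  rw [Set.pair_comm (blockAt y _) (blockAt x _)] at p2
  exact p2

lemma packP_swap_right {x y z w : Vtx m} (h : PackP x y w z) : PackP x y z w := by
  obtain ⟨p1, p2, p3, p4⟩ := h
  rw [firstDiffBlock_comm w z] at p1
  refine ⟨p1, ?_, fun k => (p3 k).trans eq_comm, fun k => (p4 k).trans (firstDiffIdx_comm _ _)⟩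
  rw [Set.pair_comm (blockAt w _) (blockAt z _)] at p2
  exact p2

lemma packP_of_phiAux {x y z w : Vtx m} (heq : phiAux x y = phiAux z w) : PackP x y z w := by
  unfold phiAux at heq
  rw [Prod.mk.injEq, Prod.mk.injEq, Prod.mk.injEq] at heq
  obtain ⟨⟨hI, hset⟩, hidx, -⟩ := heq
  have hidx' : ∀ k : ℕ, firstDiffIdx (blockAt x k) (blockAt y k)
      = firstDiffIdx (blockAt z k) (blockAt w k) := by
    intro k
    by_cases hk : k < m
    · have h1 : blockAt x k = x ⟨k, hk⟩ := dif_pos hk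
      have h2 : blockAt y k = y ⟨k, hk⟩ := dif_pos hk
      have h3 : blockAt z k = z ⟨k, hk⟩ := dif_pos hk
      have h4 : blockAt w k = w ⟨k, hk⟩ := dif_pos hk
      rw [h1, h2, h3, h4]
      exact congrFun hidx ⟨k, hk⟩
    · have h1 : blockAt x k = blockAt y k := by
        rw [blockAt, blockAt, dif_neg hk, dif_neg hk]
      have h2 : blockAt z k = blockAt w k := by
        rw [blockAt, blockAt, dif_neg hk, dif_neg hk]
      rw [(firstDiffIdx_eq_zero_iff _ _).mpr h1, (firstDiffIdx_eq_zero_iff _ _).mpr h2]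
  refine ⟨hI, by rw [← hI] at hset; exact hset, ?_, hidx'⟩
  intro k
  rw [← firstDiffIdx_eq_zero_iff, ← firstDiffIdx_eq_zero_iff, hidx' k]

/-- All orientation-free consequences of `phi x y = phi z w`. -/
lemma phi_eq_pack {x y z w : Vtx m} (h : phi x y = phi z w) : PackP x y z w := by
  have hxy' : phi x y = phiAux x y ∨ phi x y = phiAux y x := by
    unfold phi; split <;> simp
  have hzw' : phi z w = phiAux z w ∨ phi z w = phiAux w z := by
    unfold phi; split <;> simp
  rcases hxy' with h1 | h1 <;> rcases hzw' with h2 | h2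
  · exact packP_of_phiAux (h1 ▸ h2 ▸ h)
  · exact packP_swap_right (packP_of_phiAux (h1 ▸ h2 ▸ h))
  · exact packP_swap_left (packP_of_phiAux (h1 ▸ h2 ▸ h))
  · exact packP_swap_left (packP_swap_right (packP_of_phiAux (h1 ▸ h2 ▸ h)))

end Pack
-- ============ Core combinatorial lemmas ============
section Core

variable {m : ℕ}

/-- Full toolkit from a color equality between edges `xy` and `zw`. -/
lemma class_pack {x y z w : Vtx m} (hxy : x ≠ y) (hzw : z ≠ w) (h : phi x y = phi z w) :
    firstDiffBlock x y < m ∧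
    blockAt x (firstDiffBlock x y) ≠ blockAt y (firstDiffBlock x y) ∧
    blockAt z (firstDiffBlock x y) ≠ blockAt w (firstDiffBlock x y) ∧
    (∀ k < firstDiffBlock x y, blockAt x k = blockAt y k) ∧
    (∀ k < firstDiffBlock x y, blockAt z k = blockAt w k) ∧
    ({blockAt x (firstDiffBlock x y), blockAt y (firstDiffBlock x y)} : Set (Fin m → Bool))
      = {blockAt z (firstDiffBlock x y), blockAt w (firstDiffBlock x y)} ∧
    (∀ k : ℕ, blockAt x k = blockAt y k ↔ blockAt z k = blockAt w k) ∧
    (∀ k : ℕ, firstDiffIdx (blockAt x k) (blockAt y k) = firstDiffIdx (blockAt z k) (blockAt w k)) := by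
  obtain ⟨hI, hset, hiff, hidx⟩ := phi_eq_pack h
  obtain ⟨hm1, hd1, hb1⟩ := fdb_spec hxy
  obtain ⟨hm2, hd2, hb2⟩ := fdb_spec hzw
  rw [← hI] at hd2 hb2
  exact ⟨hm1, hd1, hd2, hb1, hb2, hset, hiff, hidx⟩

/-- If `φ(ab)=φ(ce)` then the two chords from `c` to `a` and `b` get different colors. -/
lemma core1 {a b c e : Vtx m} (hab : a ≠ b)
    (h1 : phi a b = phi c e) (h2 : phi b c = phi a c) : False := by
  obtain ⟨-, hset1, -, -⟩ := phi_eq_pack h1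
  obtain ⟨-, -, hiff2, -⟩ := phi_eq_pack h2
  obtain ⟨-, hd1, -⟩ := fdb_spec hab
  set I := firstDiffBlock a b with hIdef
  obtain ⟨hc, -, -, -⟩ := pair_eq_cases hset1
  rcases hc with hc | hc
  · -- c's block = a's block at I, so b's block = c's block, contradiction
    have hbc' := (hiff2 I).mpr hc.symm
    exact hd1 (hc.symm.trans hbc'.symm)
  · have ha := (hiff2 I).mp hc.symm
    exact hd1 (ha.trans hc)


section S2A
variable {a b c d e : Vtx m}

/-- No triple `φ(ab)=φ(ce)`, `φ(bc)=φ(ad)`, `φ(ea)=φ(bd)`. -/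
lemma s2a (hab : a ≠ b)
    (h1 : phi a b = phi c e) (h2 : phi b c = phi a d) (h3 : phi e a = phi b d) : False := by
  obtain ⟨-, set1, -, -⟩ := phi_eq_pack h1
  obtain ⟨-, -, iff2, idx2⟩ := phi_eq_pack h2
  obtain ⟨-, -, iff3, idx3⟩ := phi_eq_pack h3
  obtain ⟨-, d_ab, -⟩ := fdb_spec hab
  set I := firstDiffBlock a b
  obtain ⟨hC, hE, hA, hB⟩ := pair_eq_cases set1
  rcases hC with hC | hC
  · -- c = a at I, hence e = b at I
    have hE' : blockAt e I = blockAt b I := by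
      rcases hE with hE | hE
      · exfalso
        rcases hB with hB | hB
        · exact d_ab (hB.trans hC).symm
        · exact d_ab (hB.trans hE).symm
      · exact hE
    have t2 := idx2 I
    have t3 := idx3 I
    rw [hC] at t2
    rw [hE'] at t3
    have g1 : firstDiffIdx (blockAt a I) (blockAt d I)
        = firstDiffIdx (blockAt a I) (blockAt b I) := by
      rw [← t2]
      exact firstDiffIdx_comm _ _
    have g2 : firstDiffIdx (blockAt b I) (blockAt d I)
        = firstDiffIdx (blockAt a I) (blockAt b I) := by
      rw [← t3]
      exact firstDiffIdx_comm _ _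
    exact tri d_ab g1 g2
  · -- c = b at I
    have had' : blockAt a I = blockAt d I := (iff2 I).mp hC.symm
    have hE' : blockAt e I = blockAt a I := by
      rcases hE with hE | hE
      · exact hE
      · exfalso
        rcases hA with hA | hA
        · exact d_ab (hA.trans hC)
        · exact d_ab (hA.trans hE)
    have hbd' : blockAt b I = blockAt d I := (iff3 I).mp hE'
    exact d_ab (had'.trans hbd'.symm)

/-- No triple `φ(ab)=φ(ce)`, `φ(bc)=φ(bd)`, `φ(ea)=φ(ad)`. -/
lemma s2b (hab : a ≠ b)
    (h1 : phi a b = phi c e) (h2 : phi b c = phi b d) (h3 : phi e a = phi a d) : False := by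
  obtain ⟨-, set1, -, -⟩ := phi_eq_pack h1
  obtain ⟨-, -, iff2, idx2⟩ := phi_eq_pack h2
  obtain ⟨-, -, iff3, idx3⟩ := phi_eq_pack h3
  obtain ⟨-, d_ab, -⟩ := fdb_spec hab
  set I := firstDiffBlock a b
  obtain ⟨hC, hE, hA, hB⟩ := pair_eq_cases set1
  rcases hC with hC | hC
  · -- c = a at I, hence e = b at I
    have hE' : blockAt e I = blockAt b I := by
      rcases hE with hE | hE
      · exfalso
        rcases hB with hB | hB
        · exact d_ab (hB.trans hC).symm
        · exact d_ab (hB.trans hE).symm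
      · exact hE
    have t2 := idx2 I
    have t3 := idx3 I
    rw [hC] at t2
    rw [hE'] at t3
    -- t2 : idx(b,a) = idx(b,d), t3 : idx(b,a) = idx(a,d)
    have g1 : firstDiffIdx (blockAt a I) (blockAt d I)
        = firstDiffIdx (blockAt a I) (blockAt b I) := by
      rw [← t3]
      exact firstDiffIdx_comm _ _
    have g2 : firstDiffIdx (blockAt b I) (blockAt d I)
        = firstDiffIdx (blockAt a I) (blockAt b I) := by
      rw [← t2]
      exact firstDiffIdx_comm _ _
    exact tri d_ab g1 g2
  · -- c = b at I
    have hbd' : blockAt b I = blockAt d I := (iff2 I).mp hC.symm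
    have hE' : blockAt e I = blockAt a I := by
      rcases hE with hE | hE
      · exact hE
      · exfalso
        rcases hA with hA | hA
        · exact d_ab (hA.trans hC)
        · exact d_ab (hA.trans hE)
    have had' : blockAt a I = blockAt d I := (iff3 I).mp hE'
    exact d_ab (had'.trans hbd'.symm)

end S2A

end Core
section Cnt
attribute [local instance] Classical.propDecidable
variable {m : ℕ}

lemma colorCount_expand (a b c d e : Vtx m) (col : Color m) :
    colorCount a b c d e col =
      (if phi a b = col then 1 else 0) + (if phi a c = col then 1 else 0)
      + (if phi a d = col then 1 else 0) + (if phi a e = col then 1 else 0)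
      + (if phi b c = col then 1 else 0) + (if phi b d = col then 1 else 0)
      + (if phi b e = col then 1 else 0) + (if phi c d = col then 1 else 0)
      + (if phi c e = col then 1 else 0) + (if phi d e = col then 1 else 0) := by
  simp only [colorCount, edgeList, List.map_cons, List.map_nil, List.countP_cons,
    List.countP_nil, decide_eq_true_eq]
  simp only [Nat.zero_add]
  ring_nf


section KC
attribute [local instance] Classical.propDecidable
variable {m : ℕ} {a b c d e : Vtx m}

lemma KC_ab (hae : a ≠ e)
    (hcfg : ∀ col : Color m, colorCount a b c d e col = 0 ∨ colorCount a b c d e col = 2)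
    (r1 : phi a b ≠ phi b c) (r2 : phi a b ≠ phi c d) (r3 : phi a b ≠ phi d e)
    (r4 : phi a b ≠ phi e a) (r5 : phi b c ≠ phi c d) (r6 : phi b c ≠ phi d e)
    (r7 : phi b c ≠ phi e a) (r8 : phi c d ≠ phi d e) (r9 : phi c d ≠ phi e a)
    (r10 : phi d e ≠ phi e a) :
    phi a c = phi a b ∨ phi a d = phi a b ∨ phi b d = phi a b ∨ phi b e = phi a b ∨ phi c e = phi a b := by
  by_contra hno
  push_neg at hno
  obtain ⟨n1, n2, n3, n4, n5⟩ := hno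
  have hcnt := hcfg (phi a b)
  rw [colorCount_expand] at hcnt
  rw [if_pos rfl, if_neg n1, if_neg n2, if_neg (fun h => r4 (((phi_comm hae).symm.trans h).symm)), if_neg (Ne.symm r1), if_neg n3, if_neg n4, if_neg (Ne.symm r2), if_neg n5, if_neg (Ne.symm r3)] at hcnt
  omega

lemma KC_bc (hae : a ≠ e)
    (hcfg : ∀ col : Color m, colorCount a b c d e col = 0 ∨ colorCount a b c d e col = 2)
    (r1 : phi a b ≠ phi b c) (r2 : phi a b ≠ phi c d) (r3 : phi a b ≠ phi d e)
    (r4 : phi a b ≠ phi e a) (r5 : phi b c ≠ phi c d) (r6 : phi b c ≠ phi d e)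
    (r7 : phi b c ≠ phi e a) (r8 : phi c d ≠ phi d e) (r9 : phi c d ≠ phi e a)
    (r10 : phi d e ≠ phi e a) :
    phi a c = phi b c ∨ phi a d = phi b c ∨ phi b d = phi b c ∨ phi b e = phi b c ∨ phi c e = phi b c := by
  by_contra hno
  push_neg at hno
  obtain ⟨n1, n2, n3, n4, n5⟩ := hno
  have hcnt := hcfg (phi b c)
  rw [colorCount_expand] at hcnt
  rw [if_neg (r1), if_neg n1, if_neg n2, if_neg (fun h => r7 (((phi_comm hae).symm.trans h).symm)), if_pos rfl, if_neg n3, if_neg n4, if_neg (Ne.symm r5), if_neg n5, if_neg (Ne.symm r6)] at hcnt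
  omega

lemma KC_cd (hae : a ≠ e)
    (hcfg : ∀ col : Color m, colorCount a b c d e col = 0 ∨ colorCount a b c d e col = 2)
    (r1 : phi a b ≠ phi b c) (r2 : phi a b ≠ phi c d) (r3 : phi a b ≠ phi d e)
    (r4 : phi a b ≠ phi e a) (r5 : phi b c ≠ phi c d) (r6 : phi b c ≠ phi d e)
    (r7 : phi b c ≠ phi e a) (r8 : phi c d ≠ phi d e) (r9 : phi c d ≠ phi e a)
    (r10 : phi d e ≠ phi e a) :
    phi a c = phi c d ∨ phi a d = phi c d ∨ phi b d = phi c d ∨ phi b e = phi c d ∨ phi c e = phi c d := by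
  by_contra hno
  push_neg at hno
  obtain ⟨n1, n2, n3, n4, n5⟩ := hno
  have hcnt := hcfg (phi c d)
  rw [colorCount_expand] at hcnt
  rw [if_neg (r2), if_neg n1, if_neg n2, if_neg (fun h => r9 (((phi_comm hae).symm.trans h).symm)), if_neg (r5), if_neg n3, if_neg n4, if_pos rfl, if_neg n5, if_neg (Ne.symm r8)] at hcnt
  omega

lemma KC_de (hae : a ≠ e)
    (hcfg : ∀ col : Color m, colorCount a b c d e col = 0 ∨ colorCount a b c d e col = 2)
    (r1 : phi a b ≠ phi b c) (r2 : phi a b ≠ phi c d) (r3 : phi a b ≠ phi d e)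
    (r4 : phi a b ≠ phi e a) (r5 : phi b c ≠ phi c d) (r6 : phi b c ≠ phi d e)
    (r7 : phi b c ≠ phi e a) (r8 : phi c d ≠ phi d e) (r9 : phi c d ≠ phi e a)
    (r10 : phi d e ≠ phi e a) :
    phi a c = phi d e ∨ phi a d = phi d e ∨ phi b d = phi d e ∨ phi b e = phi d e ∨ phi c e = phi d e := by
  by_contra hno
  push_neg at hno
  obtain ⟨n1, n2, n3, n4, n5⟩ := hno
  have hcnt := hcfg (phi d e)
  rw [colorCount_expand] at hcnt
  rw [if_neg (r3), if_neg n1, if_neg n2, if_neg (fun h => r10 (((phi_comm hae).symm.trans h).symm)), if_neg (r6), if_neg n3, if_neg n4, if_neg (r8), if_neg n5, if_pos rfl] at hcnt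
  omega

lemma KC_ea (hae : a ≠ e)
    (hcfg : ∀ col : Color m, colorCount a b c d e col = 0 ∨ colorCount a b c d e col = 2)
    (r1 : phi a b ≠ phi b c) (r2 : phi a b ≠ phi c d) (r3 : phi a b ≠ phi d e)
    (r4 : phi a b ≠ phi e a) (r5 : phi b c ≠ phi c d) (r6 : phi b c ≠ phi d e)
    (r7 : phi b c ≠ phi e a) (r8 : phi c d ≠ phi d e) (r9 : phi c d ≠ phi e a)
    (r10 : phi d e ≠ phi e a) :
    phi a c = phi e a ∨ phi a d = phi e a ∨ phi b d = phi e a ∨ phi b e = phi e a ∨ phi c e = phi e a := by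
  by_contra hno
  push_neg at hno
  obtain ⟨n1, n2, n3, n4, n5⟩ := hno
  have hcnt := hcfg (phi e a)
  rw [colorCount_expand] at hcnt
  rw [if_neg (r4), if_neg n1, if_neg n2, if_pos (phi_comm hae), if_neg (r7), if_neg n3, if_neg n4, if_neg (r9), if_neg n5, if_neg (r10)] at hcnt
  omega

end KC

end Cnt
section MasterSec
variable {m : ℕ}

lemma pigeon5eq {α : Type*} {t1 t2 t3 t4 t5 c1 c2 c3 c4 c5 : α}
    (htt : t4 = t5)
    (h12 : c1 ≠ c2) (h13 : c1 ≠ c3) (h14 : c1 ≠ c4) (h15 : c1 ≠ c5)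
    (h23 : c2 ≠ c3) (h24 : c2 ≠ c4) (h25 : c2 ≠ c5)
    (h34 : c3 ≠ c4) (h35 : c3 ≠ c5) (h45 : c4 ≠ c5)
    (h1 : t1 = c1 ∨ t2 = c1 ∨ t3 = c1 ∨ t4 = c1 ∨ t5 = c1)
    (h2 : t1 = c2 ∨ t2 = c2 ∨ t3 = c2 ∨ t4 = c2 ∨ t5 = c2)
    (h3 : t1 = c3 ∨ t2 = c3 ∨ t3 = c3 ∨ t4 = c3 ∨ t5 = c3)
    (h4 : t1 = c4 ∨ t2 = c4 ∨ t3 = c4 ∨ t4 = c4 ∨ t5 = c4)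
    (h5 : t1 = c5 ∨ t2 = c5 ∨ t3 = c5 ∨ t4 = c5 ∨ t5 = c5) : False := by
  classical
  subst htt
  have hmem : ∀ x : α, (t1 = x ∨ t2 = x ∨ t3 = x ∨ t4 = x ∨ t4 = x) →
      x ∈ ({t1, t2, t3, t4} : Finset α) := by
    intro x hx
    simp only [Finset.mem_insert, Finset.mem_singleton]
    rcases hx with h|h|h|h|h
    · exact Or.inl h.symm
    · exact Or.inr (Or.inl h.symm)
    · exact Or.inr (Or.inr (Or.inl h.symm))
    · exact Or.inr (Or.inr (Or.inr h.symm))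
    · exact Or.inr (Or.inr (Or.inr h.symm))
  have hsub : ({c1, c2, c3, c4, c5} : Finset α) ⊆ {t1, t2, t3, t4} := by
    intro x hx
    simp only [Finset.mem_insert, Finset.mem_singleton] at hx
    rcases hx with rfl|rfl|rfl|rfl|rfl
    · exact hmem _ h1
    · exact hmem _ h2
    · exact hmem _ h3
    · exact hmem _ h4
    · exact hmem _ h5
  have hc5 : ({c1, c2, c3, c4, c5} : Finset α).card = 5 := by
    rw [Finset.card_insert_of_notMem (by simp [h12, h13, h14, h15]),
      Finset.card_insert_of_notMem (by simp [h23, h24, h25]),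
      Finset.card_insert_of_notMem (by simp [h34, h35]),
      Finset.card_insert_of_notMem (by simp [h45]), Finset.card_singleton]
  have hle := Finset.card_le_card hsub
  have a1 := Finset.card_insert_le t1 ({t2, t3, t4} : Finset α)
  have a2 := Finset.card_insert_le t2 ({t3, t4} : Finset α)
  have a3 := Finset.card_insert_le t3 ({t4} : Finset α)
  have a4 : ({t4} : Finset α).card = 1 := Finset.card_singleton t4
  omega

/-- Master lemma: matching class on `{ab, ce}` plus chord classes for `bc` and `ea`
is impossible. -/
lemma master (a b c d e : Vtx m) (hab : a ≠ b) (hac : a ≠ c) (hae : a ≠ e)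
    (hbc : b ≠ c) (hbe : b ≠ e) (hce : c ≠ e)
    (hr1 : phi a b ≠ phi b c) (hr2 : phi a b ≠ phi e a) (hr3 : phi b c ≠ phi e a)
    (hm : phi a b = phi c e)
    (H2 : phi a c = phi b c ∨ phi a d = phi b c ∨ phi b d = phi b c ∨
      phi b e = phi b c ∨ phi c e = phi b c)
    (H5 : phi a c = phi e a ∨ phi a d = phi e a ∨ phi b d = phi e a ∨
      phi b e = phi e a ∨ phi c e = phi e a) : False := by
  have core_ac_ea : phi a c = phi e a → False := by
    intro h5
    exact core1 hce hm.symm (h5.symm.trans (phi_comm hac))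
  have core_be_ea : phi b e = phi e a → False := by
    intro h5
    exact core1 hab (hm.trans (phi_comm hce)) (h5.trans (phi_comm hae).symm)
  rcases H2 with h2 | h2 | h2 | h2 | h2
  · -- E2 = ac
    exact core1 hab hm h2.symm
  · -- E2 = ad
    rcases H5 with h5 | h5 | h5 | h5 | h5
    · exact core_ac_ea h5
    · exact hr3 (h2.symm.trans h5)
    · exact s2a hab hm h2.symm h5.symm
    · exact core_be_ea h5
    · exact hr2 (hm.trans h5)
  · -- E2 = bd
    rcases H5 with h5 | h5 | h5 | h5 | h5
    · exact core_ac_ea h5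
    · exact s2b hab hm h2.symm h5.symm
    · exact hr3 (h2.symm.trans h5)
    · exact core_be_ea h5
    · exact hr2 (hm.trans h5)
  · -- E2 = be
    exact core1 hce (hm.symm.trans (phi_comm hab)) (((phi_comm hbe).symm.trans h2).trans (phi_comm hbc))
  · -- E2 = ce
    exact hr1 (hm.trans h2)

end MasterSec

attribute [local irreducible] phi

set_option maxHeartbeats 1000000 in
/-- No 2-2-2-2-2 configuration under `φ` contains a rainbow 5-cycle together with at
least one matching color class. -/
theorem no_rainbow_cycle_plus_matching (m : ℕ) (hm : 0 < m) :
    ¬ ∃ a b c d e : Vtx m, IsConfig22222 a b c d e ∧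
      (phi a b ≠ phi b c ∧ phi a b ≠ phi c d ∧ phi a b ≠ phi d e ∧ phi a b ≠ phi e a ∧
       phi b c ≠ phi c d ∧ phi b c ≠ phi d e ∧ phi b c ≠ phi e a ∧
       phi c d ≠ phi d e ∧ phi c d ≠ phi e a ∧ phi d e ≠ phi e a) ∧
      ∃ col : Color m, IsMatchingClass a b c d e col := by
  rintro ⟨a, b, c, d, e, ⟨⟨hab, hac, had, hae, hbc, hbd, hbe, hcd, hce, hde⟩, hcfg⟩,
    ⟨r1, r2, r3, r4, r5, r6, r7, r8, r9, r10⟩, col,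
    p, hp, q, hq, hpc, hqc, hn1, hn2, hn3, hn4⟩
  have K1 := KC_ab hae hcfg r1 r2 r3 r4 r5 r6 r7 r8 r9 r10
  have K2 := KC_bc hae hcfg r1 r2 r3 r4 r5 r6 r7 r8 r9 r10
  have K3 := KC_cd hae hcfg r1 r2 r3 r4 r5 r6 r7 r8 r9 r10
  have K4 := KC_de hae hcfg r1 r2 r3 r4 r5 r6 r7 r8 r9 r10
  have K5 := KC_ea hae hcfg r1 r2 r3 r4 r5 r6 r7 r8 r9 r10
  have e_ab : phi a b = phi b a := phi_comm hab
  have e_ac : phi a c = phi c a := phi_comm hac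
  have e_ad : phi a d = phi d a := phi_comm had
  have e_ae : phi a e = phi e a := phi_comm hae
  have e_bc : phi b c = phi c b := phi_comm hbc
  have e_bd : phi b d = phi d b := phi_comm hbd
  have e_be : phi b e = phi e b := phi_comm hbe
  have e_cd : phi c d = phi d c := phi_comm hcd
  have e_ce : phi c e = phi e c := phi_comm hce
  have e_de : phi d e = phi e d := phi_comm hde
  have M0 : phi a b = phi c e → False := fun hmm =>
    master a b c d e hab hac hae hbc hbe hce r1 r4 r7 hmm K2 K5
  have H2_1 : phi b d = phi c d ∨ phi b e = phi c d ∨ phi c e = phi c d ∨ phi c a = phi c d ∨ phi d a = phi c d := by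
    rcases K3 with h | h | h | h | h
    · exact Or.inr (Or.inr (Or.inr (Or.inl ((e_ac.symm.trans h)))))
    · exact Or.inr (Or.inr (Or.inr (Or.inr ((e_ad.symm.trans h)))))
    · exact Or.inl (h)
    · exact Or.inr (Or.inl (h))
    · exact Or.inr (Or.inr (Or.inl (h)))
  have H5_1 : phi b d = phi a b ∨ phi b e = phi a b ∨ phi c e = phi a b ∨ phi c a = phi a b ∨ phi d a = phi a b := by
    rcases K1 with h | h | h | h | h
    · exact Or.inr (Or.inr (Or.inr (Or.inl ((e_ac.symm.trans h)))))
    · exact Or.inr (Or.inr (Or.inr (Or.inr ((e_ad.symm.trans h)))))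
    · exact Or.inl (h)
    · exact Or.inr (Or.inl (h))
    · exact Or.inr (Or.inr (Or.inl (h)))
  have M1 : phi b c = phi d a → False := fun hmm =>
    master b c d e a hbc hbd hab.symm hcd hac.symm had.symm r5 r1.symm r2.symm hmm H2_1 H5_1
  have H2_2 : phi c e = phi d e ∨ phi c a = phi d e ∨ phi d a = phi d e ∨ phi d b = phi d e ∨ phi e b = phi d e := by
    rcases K4 with h | h | h | h | h
    · exact Or.inr (Or.inl ((e_ac.symm.trans h)))
    · exact Or.inr (Or.inr (Or.inl ((e_ad.symm.trans h))))
    · exact Or.inr (Or.inr (Or.inr (Or.inl ((e_bd.symm.trans h)))))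
    · exact Or.inr (Or.inr (Or.inr (Or.inr ((e_be.symm.trans h)))))
    · exact Or.inl (h)
  have H5_2 : phi c e = phi b c ∨ phi c a = phi b c ∨ phi d a = phi b c ∨ phi d b = phi b c ∨ phi e b = phi b c := by
    rcases K2 with h | h | h | h | h
    · exact Or.inr (Or.inl ((e_ac.symm.trans h)))
    · exact Or.inr (Or.inr (Or.inl ((e_ad.symm.trans h))))
    · exact Or.inr (Or.inr (Or.inr (Or.inl ((e_bd.symm.trans h)))))
    · exact Or.inr (Or.inr (Or.inr (Or.inr ((e_be.symm.trans h)))))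
    · exact Or.inl (h)
  have M2 : phi c d = phi e b → False := fun hmm =>
    master c d e a b hcd hce hbc.symm hde hbd.symm hbe.symm r8 r5.symm r6.symm hmm H2_2 H5_2
  have H2_3 : phi d a = phi e a ∨ phi d b = phi e a ∨ phi e b = phi e a ∨ phi e c = phi e a ∨ phi a c = phi e a := by
    rcases K5 with h | h | h | h | h
    · exact Or.inr (Or.inr (Or.inr (Or.inr (h))))
    · exact Or.inl ((e_ad.symm.trans h))
    · exact Or.inr (Or.inl ((e_bd.symm.trans h)))
    · exact Or.inr (Or.inr (Or.inl ((e_be.symm.trans h))))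
    · exact Or.inr (Or.inr (Or.inr (Or.inl ((e_ce.symm.trans h)))))
  have H5_3 : phi d a = phi c d ∨ phi d b = phi c d ∨ phi e b = phi c d ∨ phi e c = phi c d ∨ phi a c = phi c d := by
    rcases K3 with h | h | h | h | h
    · exact Or.inr (Or.inr (Or.inr (Or.inr (h))))
    · exact Or.inl ((e_ad.symm.trans h))
    · exact Or.inr (Or.inl ((e_bd.symm.trans h)))
    · exact Or.inr (Or.inr (Or.inl ((e_be.symm.trans h))))
    · exact Or.inr (Or.inr (Or.inr (Or.inl ((e_ce.symm.trans h)))))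
  have M3 : phi d e = phi a c → False := fun hmm =>
    master d e a b c hde had.symm hcd.symm hae.symm hce.symm hac r10 r8.symm r9.symm hmm H2_3 H5_3
  have H2_4 : phi e b = phi a b ∨ phi e c = phi a b ∨ phi a c = phi a b ∨ phi a d = phi a b ∨ phi b d = phi a b := by
    rcases K1 with h | h | h | h | h
    · exact Or.inr (Or.inr (Or.inl (h)))
    · exact Or.inr (Or.inr (Or.inr (Or.inl (h))))
    · exact Or.inr (Or.inr (Or.inr (Or.inr (h))))
    · exact Or.inl ((e_be.symm.trans h))
    · exact Or.inr (Or.inl ((e_ce.symm.trans h)))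
  have H5_4 : phi e b = phi d e ∨ phi e c = phi d e ∨ phi a c = phi d e ∨ phi a d = phi d e ∨ phi b d = phi d e := by
    rcases K4 with h | h | h | h | h
    · exact Or.inr (Or.inr (Or.inl (h)))
    · exact Or.inr (Or.inr (Or.inr (Or.inl (h))))
    · exact Or.inr (Or.inr (Or.inr (Or.inr (h))))
    · exact Or.inl ((e_be.symm.trans h))
    · exact Or.inr (Or.inl ((e_ce.symm.trans h)))
  have M4 : phi e a = phi b d → False := fun hmm =>
    master e a b c d hae.symm hbe.symm hde.symm hab had hbd r4.symm r10.symm r3 hmm H2_4 H5_4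
  have C1 : phi a c = phi b d → False := by
    intro hcc
    have D1 : phi a d = phi a b ∨ phi b e = phi a b ∨ phi c e = phi a b ∨ phi a c = phi a b ∨ phi b d = phi a b := by
      rcases K1 with h | h | h | h | h
      · exact Or.inr (Or.inr (Or.inr (Or.inl (h))))
      · exact Or.inl (h)
      · exact Or.inr (Or.inr (Or.inr (Or.inr (h))))
      · exact Or.inr (Or.inl (h))
      · exact Or.inr (Or.inr (Or.inl (h)))
    have D2 : phi a d = phi b c ∨ phi b e = phi b c ∨ phi c e = phi b c ∨ phi a c = phi b c ∨ phi b d = phi b c := by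
      rcases K2 with h | h | h | h | h
      · exact Or.inr (Or.inr (Or.inr (Or.inl (h))))
      · exact Or.inl (h)
      · exact Or.inr (Or.inr (Or.inr (Or.inr (h))))
      · exact Or.inr (Or.inl (h))
      · exact Or.inr (Or.inr (Or.inl (h)))
    have D3 : phi a d = phi c d ∨ phi b e = phi c d ∨ phi c e = phi c d ∨ phi a c = phi c d ∨ phi b d = phi c d := by
      rcases K3 with h | h | h | h | h
      · exact Or.inr (Or.inr (Or.inr (Or.inl (h))))
      · exact Or.inl (h)
      · exact Or.inr (Or.inr (Or.inr (Or.inr (h))))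
      · exact Or.inr (Or.inl (h))
      · exact Or.inr (Or.inr (Or.inl (h)))
    have D4 : phi a d = phi d e ∨ phi b e = phi d e ∨ phi c e = phi d e ∨ phi a c = phi d e ∨ phi b d = phi d e := by
      rcases K4 with h | h | h | h | h
      · exact Or.inr (Or.inr (Or.inr (Or.inl (h))))
      · exact Or.inl (h)
      · exact Or.inr (Or.inr (Or.inr (Or.inr (h))))
      · exact Or.inr (Or.inl (h))
      · exact Or.inr (Or.inr (Or.inl (h)))
    have D5 : phi a d = phi e a ∨ phi b e = phi e a ∨ phi c e = phi e a ∨ phi a c = phi e a ∨ phi b d = phi e a := by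
      rcases K5 with h | h | h | h | h
      · exact Or.inr (Or.inr (Or.inr (Or.inl (h))))
      · exact Or.inl (h)
      · exact Or.inr (Or.inr (Or.inr (Or.inr (h))))
      · exact Or.inr (Or.inl (h))
      · exact Or.inr (Or.inr (Or.inl (h)))
    exact pigeon5eq hcc r1 r2 r3 r4 r5 r6 r7 r8 r9 r10 D1 D2 D3 D4 D5
  have C2 : phi a c = phi b e → False := by
    intro hcc
    have D1 : phi a d = phi a b ∨ phi b d = phi a b ∨ phi c e = phi a b ∨ phi a c = phi a b ∨ phi b e = phi a b := by
      rcases K1 with h | h | h | h | h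
      · exact Or.inr (Or.inr (Or.inr (Or.inl (h))))
      · exact Or.inl (h)
      · exact Or.inr (Or.inl (h))
      · exact Or.inr (Or.inr (Or.inr (Or.inr (h))))
      · exact Or.inr (Or.inr (Or.inl (h)))
    have D2 : phi a d = phi b c ∨ phi b d = phi b c ∨ phi c e = phi b c ∨ phi a c = phi b c ∨ phi b e = phi b c := by
      rcases K2 with h | h | h | h | h
      · exact Or.inr (Or.inr (Or.inr (Or.inl (h))))
      · exact Or.inl (h)
      · exact Or.inr (Or.inl (h))
      · exact Or.inr (Or.inr (Or.inr (Or.inr (h))))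
      · exact Or.inr (Or.inr (Or.inl (h)))
    have D3 : phi a d = phi c d ∨ phi b d = phi c d ∨ phi c e = phi c d ∨ phi a c = phi c d ∨ phi b e = phi c d := by
      rcases K3 with h | h | h | h | h
      · exact Or.inr (Or.inr (Or.inr (Or.inl (h))))
      · exact Or.inl (h)
      · exact Or.inr (Or.inl (h))
      · exact Or.inr (Or.inr (Or.inr (Or.inr (h))))
      · exact Or.inr (Or.inr (Or.inl (h)))
    have D4 : phi a d = phi d e ∨ phi b d = phi d e ∨ phi c e = phi d e ∨ phi a c = phi d e ∨ phi b e = phi d e := by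
      rcases K4 with h | h | h | h | h
      · exact Or.inr (Or.inr (Or.inr (Or.inl (h))))
      · exact Or.inl (h)
      · exact Or.inr (Or.inl (h))
      · exact Or.inr (Or.inr (Or.inr (Or.inr (h))))
      · exact Or.inr (Or.inr (Or.inl (h)))
    have D5 : phi a d = phi e a ∨ phi b d = phi e a ∨ phi c e = phi e a ∨ phi a c = phi e a ∨ phi b e = phi e a := by
      rcases K5 with h | h | h | h | h
      · exact Or.inr (Or.inr (Or.inr (Or.inl (h))))
      · exact Or.inl (h)
      · exact Or.inr (Or.inl (h))
      · exact Or.inr (Or.inr (Or.inr (Or.inr (h))))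
      · exact Or.inr (Or.inr (Or.inl (h)))
    exact pigeon5eq hcc r1 r2 r3 r4 r5 r6 r7 r8 r9 r10 D1 D2 D3 D4 D5
  have C3 : phi a d = phi b e → False := by
    intro hcc
    have D1 : phi a c = phi a b ∨ phi b d = phi a b ∨ phi c e = phi a b ∨ phi a d = phi a b ∨ phi b e = phi a b := by
      rcases K1 with h | h | h | h | h
      · exact Or.inl (h)
      · exact Or.inr (Or.inr (Or.inr (Or.inl (h))))
      · exact Or.inr (Or.inl (h))
      · exact Or.inr (Or.inr (Or.inr (Or.inr (h))))
      · exact Or.inr (Or.inr (Or.inl (h)))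
    have D2 : phi a c = phi b c ∨ phi b d = phi b c ∨ phi c e = phi b c ∨ phi a d = phi b c ∨ phi b e = phi b c := by
      rcases K2 with h | h | h | h | h
      · exact Or.inl (h)
      · exact Or.inr (Or.inr (Or.inr (Or.inl (h))))
      · exact Or.inr (Or.inl (h))
      · exact Or.inr (Or.inr (Or.inr (Or.inr (h))))
      · exact Or.inr (Or.inr (Or.inl (h)))
    have D3 : phi a c = phi c d ∨ phi b d = phi c d ∨ phi c e = phi c d ∨ phi a d = phi c d ∨ phi b e = phi c d := by
      rcases K3 with h | h | h | h | h
      · exact Or.inl (h)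
      · exact Or.inr (Or.inr (Or.inr (Or.inl (h))))
      · exact Or.inr (Or.inl (h))
      · exact Or.inr (Or.inr (Or.inr (Or.inr (h))))
      · exact Or.inr (Or.inr (Or.inl (h)))
    have D4 : phi a c = phi d e ∨ phi b d = phi d e ∨ phi c e = phi d e ∨ phi a d = phi d e ∨ phi b e = phi d e := by
      rcases K4 with h | h | h | h | h
      · exact Or.inl (h)
      · exact Or.inr (Or.inr (Or.inr (Or.inl (h))))
      · exact Or.inr (Or.inl (h))
      · exact Or.inr (Or.inr (Or.inr (Or.inr (h))))
      · exact Or.inr (Or.inr (Or.inl (h)))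
    have D5 : phi a c = phi e a ∨ phi b d = phi e a ∨ phi c e = phi e a ∨ phi a d = phi e a ∨ phi b e = phi e a := by
      rcases K5 with h | h | h | h | h
      · exact Or.inl (h)
      · exact Or.inr (Or.inr (Or.inr (Or.inl (h))))
      · exact Or.inr (Or.inl (h))
      · exact Or.inr (Or.inr (Or.inr (Or.inr (h))))
      · exact Or.inr (Or.inr (Or.inl (h)))
    exact pigeon5eq hcc r1 r2 r3 r4 r5 r6 r7 r8 r9 r10 D1 D2 D3 D4 D5
  have C4 : phi a d = phi c e → False := by
    intro hcc
    have D1 : phi a c = phi a b ∨ phi b d = phi a b ∨ phi b e = phi a b ∨ phi a d = phi a b ∨ phi c e = phi a b := by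
      rcases K1 with h | h | h | h | h
      · exact Or.inl (h)
      · exact Or.inr (Or.inr (Or.inr (Or.inl (h))))
      · exact Or.inr (Or.inl (h))
      · exact Or.inr (Or.inr (Or.inl (h)))
      · exact Or.inr (Or.inr (Or.inr (Or.inr (h))))
    have D2 : phi a c = phi b c ∨ phi b d = phi b c ∨ phi b e = phi b c ∨ phi a d = phi b c ∨ phi c e = phi b c := by
      rcases K2 with h | h | h | h | h
      · exact Or.inl (h)
      · exact Or.inr (Or.inr (Or.inr (Or.inl (h))))
      · exact Or.inr (Or.inl (h))
      · exact Or.inr (Or.inr (Or.inl (h)))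
      · exact Or.inr (Or.inr (Or.inr (Or.inr (h))))
    have D3 : phi a c = phi c d ∨ phi b d = phi c d ∨ phi b e = phi c d ∨ phi a d = phi c d ∨ phi c e = phi c d := by
      rcases K3 with h | h | h | h | h
      · exact Or.inl (h)
      · exact Or.inr (Or.inr (Or.inr (Or.inl (h))))
      · exact Or.inr (Or.inl (h))
      · exact Or.inr (Or.inr (Or.inl (h)))
      · exact Or.inr (Or.inr (Or.inr (Or.inr (h))))
    have D4 : phi a c = phi d e ∨ phi b d = phi d e ∨ phi b e = phi d e ∨ phi a d = phi d e ∨ phi c e = phi d e := by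
      rcases K4 with h | h | h | h | h
      · exact Or.inl (h)
      · exact Or.inr (Or.inr (Or.inr (Or.inl (h))))
      · exact Or.inr (Or.inl (h))
      · exact Or.inr (Or.inr (Or.inl (h)))
      · exact Or.inr (Or.inr (Or.inr (Or.inr (h))))
    have D5 : phi a c = phi e a ∨ phi b d = phi e a ∨ phi b e = phi e a ∨ phi a d = phi e a ∨ phi c e = phi e a := by
      rcases K5 with h | h | h | h | h
      · exact Or.inl (h)
      · exact Or.inr (Or.inr (Or.inr (Or.inl (h))))
      · exact Or.inr (Or.inl (h))
      · exact Or.inr (Or.inr (Or.inl (h)))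
      · exact Or.inr (Or.inr (Or.inr (Or.inr (h))))
    exact pigeon5eq hcc r1 r2 r3 r4 r5 r6 r7 r8 r9 r10 D1 D2 D3 D4 D5
  have C5 : phi b d = phi c e → False := by
    intro hcc
    have D1 : phi a c = phi a b ∨ phi a d = phi a b ∨ phi b e = phi a b ∨ phi b d = phi a b ∨ phi c e = phi a b := by
      rcases K1 with h | h | h | h | h
      · exact Or.inl (h)
      · exact Or.inr (Or.inl (h))
      · exact Or.inr (Or.inr (Or.inr (Or.inl (h))))
      · exact Or.inr (Or.inr (Or.inl (h)))
      · exact Or.inr (Or.inr (Or.inr (Or.inr (h))))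
    have D2 : phi a c = phi b c ∨ phi a d = phi b c ∨ phi b e = phi b c ∨ phi b d = phi b c ∨ phi c e = phi b c := by
      rcases K2 with h | h | h | h | h
      · exact Or.inl (h)
      · exact Or.inr (Or.inl (h))
      · exact Or.inr (Or.inr (Or.inr (Or.inl (h))))
      · exact Or.inr (Or.inr (Or.inl (h)))
      · exact Or.inr (Or.inr (Or.inr (Or.inr (h))))
    have D3 : phi a c = phi c d ∨ phi a d = phi c d ∨ phi b e = phi c d ∨ phi b d = phi c d ∨ phi c e = phi c d := by
      rcases K3 with h | h | h | h | h
      · exact Or.inl (h)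
      · exact Or.inr (Or.inl (h))
      · exact Or.inr (Or.inr (Or.inr (Or.inl (h))))
      · exact Or.inr (Or.inr (Or.inl (h)))
      · exact Or.inr (Or.inr (Or.inr (Or.inr (h))))
    have D4 : phi a c = phi d e ∨ phi a d = phi d e ∨ phi b e = phi d e ∨ phi b d = phi d e ∨ phi c e = phi d e := by
      rcases K4 with h | h | h | h | h
      · exact Or.inl (h)
      · exact Or.inr (Or.inl (h))
      · exact Or.inr (Or.inr (Or.inr (Or.inl (h))))
      · exact Or.inr (Or.inr (Or.inl (h)))
      · exact Or.inr (Or.inr (Or.inr (Or.inr (h))))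
    have D5 : phi a c = phi e a ∨ phi a d = phi e a ∨ phi b e = phi e a ∨ phi b d = phi e a ∨ phi c e = phi e a := by
      rcases K5 with h | h | h | h | h
      · exact Or.inl (h)
      · exact Or.inr (Or.inl (h))
      · exact Or.inr (Or.inr (Or.inr (Or.inl (h))))
      · exact Or.inr (Or.inr (Or.inl (h)))
      · exact Or.inr (Or.inr (Or.inr (Or.inr (h))))
    exact pigeon5eq hcc r1 r2 r3 r4 r5 r6 r7 r8 r9 r10 D1 D2 D3 D4 D5
  simp only [edgeList, List.mem_cons, List.not_mem_nil, or_false] at hp hq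
  rcases hp with rfl | rfl | rfl | rfl | rfl | rfl | rfl | rfl | rfl | rfl <;>
    rcases hq with rfl | rfl | rfl | rfl | rfl | rfl | rfl | rfl | rfl | rfl <;>
    first
    | exact hn1 rfl
    | exact hn2 rfl
    | exact hn3 rfl
    | exact hn4 rfl
    | exact r2 (hpc.trans hqc.symm)
    | exact r2 (hqc.trans hpc.symm)
    | exact r3 (hpc.trans hqc.symm)
    | exact r3 (hqc.trans hpc.symm)
    | exact r6 (hpc.trans hqc.symm)
    | exact r6 (hqc.trans hpc.symm)
    | exact r7 ((hpc.trans hqc.symm).trans e_ae)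
    | exact r7 ((hqc.trans hpc.symm).trans e_ae)
    | exact r9 ((hpc.trans hqc.symm).trans e_ae)
    | exact r9 ((hqc.trans hpc.symm).trans e_ae)
    | exact M0 (hpc.trans hqc.symm)
    | exact M0 (hqc.trans hpc.symm)
    | exact M1 ((hpc.trans hqc.symm).trans e_ad)
    | exact M1 ((hqc.trans hpc.symm).trans e_ad)
    | exact M2 ((hpc.trans hqc.symm).trans e_be)
    | exact M2 ((hqc.trans hpc.symm).trans e_be)
    | exact M3 (hpc.trans hqc.symm)
    | exact M3 (hqc.trans hpc.symm)
    | exact M4 (e_ae.symm.trans (hpc.trans hqc.symm))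
    | exact M4 (e_ae.symm.trans (hqc.trans hpc.symm))
    | exact C1 (hpc.trans hqc.symm)
    | exact C1 (hqc.trans hpc.symm)
    | exact C2 (hpc.trans hqc.symm)
    | exact C2 (hqc.trans hpc.symm)
    | exact C3 (hpc.trans hqc.symm)
    | exact C3 (hqc.trans hpc.symm)
    | exact C4 (hpc.trans hqc.symm)
    | exact C4 (hqc.trans hpc.symm)
    | exact C5 (hpc.trans hqc.symm)
    | exact C5 (hqc.trans hpc.symm)

end CFLS
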